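/- Let B_w be a unilateral weighted backward shift on X = c₀(ℤ₊) or ℓ^p(ℤ₊), 1 ≤ p < ∞, with bounded weight w = (w_n)_{n≥1}. Then B_w is topologically multiply recurrent if and only if for every M > 0 there exists m₀ such that for every m > m₀ there exists n ∈ ℕ with min_{1 ≤ l ≤ m} |w_1 w_2 ⋯ w_{ln}| > M. -/

import Mathlib

open Filter Topology
open scoped ENNReal

noncomputable def blockCount (A : Set ℕ) (k s : ℕ) : ℕ :=
  Nat.card (A ∩ Set.Icc (k + 1) (k + s) : Set ℕ)

/-- upper Banach density -/
noncomputable def upperBanachDensity (A : Set ℕ) : ℝ :=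
  Filter.limsup (fun s : ℕ =>
    (Filter.limsup (fun k : ℕ => (blockCount A k s : ℝ)) Filter.atTop) / s) Filter.atTop

/-- lower Banach density -/
noncomputable def lowerBanachDensity (A : Set ℕ) : ℝ :=
  Filter.liminf (fun s : ℕ =>
    (Filter.liminf (fun k : ℕ => (blockCount A k s : ℝ)) Filter.atTop) / s) Filter.atTop

/-- the family `BD̄` of sets of positive upper Banach density -/
def upperBD (A : Set ℕ) : Prop := 0 < upperBanachDensity A

/-- the family `BD₁` of sets of lower Banach density one -/
def BDone (A : Set ℕ) : Prop := lowerBanachDensity A = 1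

/-- essential idempotent ultrafilter -/
def IsEssentialIdempotent (p : Ultrafilter ℕ) : Prop :=
  (∀ A : Set ℕ, A ∈ p ↔ {n : ℕ | {m : ℕ | n + m ∈ A} ∈ p} ∈ p) ∧
    ∀ A ∈ p, 0 < upperBanachDensity A

/-- membership in `𝒟*`, the intersection of all essential idempotents -/
def InDstar (A : Set ℕ) : Prop :=
  ∀ p : Ultrafilter ℕ, IsEssentialIdempotent p → A ∈ p

/-- limit of a real sequence along a family of subsets of ℕ -/
def FamilyLim (F : Set ℕ → Prop) (x : ℕ → ℝ) (y : ℝ) : Prop :=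
  ∀ V : Set ℝ, IsOpen V → y ∈ V → F {n | x n ∈ V}

/-- property `P_𝓕` for a sequence of maps -/
def SatisfiesP {X : Type*} [TopologicalSpace X] (T : ℕ → X → X) (F : Set ℕ → Prop) : Prop :=
  ∀ U : Set X, IsOpen U → U.Nonempty → ∃ x : X, F {n | T n x ∈ U}

/-- topological 𝒟-recurrence with respect to a sequence of scalars -/
def TopDRecurrentWrt {X : Type*} [NormedAddCommGroup X] [NormedSpace ℂ X]
    (T : X →L[ℂ] X) (l : ℕ → ℂ) : Prop :=
  ∃ p : Ultrafilter ℕ, IsEssentialIdempotent p ∧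
    ∀ U : Set X, IsOpen U → U.Nonempty → ∃ x : X, ∀ r : ℕ,
      {k : ℕ | 0 < upperBanachDensity
        {a : ℕ | ∀ j ≤ r, (T ^ (j * k)) (l a • (T ^ a) x) ∈ U}} ∈ p

/-- topological 𝒟-recurrence -/
def TopDRecurrent {X : Type*} [NormedAddCommGroup X] [NormedSpace ℂ X]
    (T : X →L[ℂ] X) : Prop :=
  TopDRecurrentWrt T fun _ => 1

/-- reiterative hypercyclicity for a sequence of maps -/
def ReiterativelyHypercyclicSeq {X : Type*} [TopologicalSpace X] (T : ℕ → X → X) : Prop :=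
  ∃ x : X, ∀ U : Set X, IsOpen U → U.Nonempty → 0 < upperBanachDensity {n | T n x ∈ U}

/-- 𝒟-reiterative hypercyclicity with respect to a sequence of scalars -/
def DReiterativelyHypercyclicWrt {X : Type*} [NormedAddCommGroup X] [NormedSpace ℂ X]
    (T : X →L[ℂ] X) (l : ℕ → ℂ) : Prop :=
  ∃ p : Ultrafilter ℕ, IsEssentialIdempotent p ∧ ∃ x : X,
    ∀ U : Set X, IsOpen U → U.Nonempty → ∀ r : ℕ,
      {k : ℕ | 0 < upperBanachDensity
        {a : ℕ | ∀ j ≤ r, (T ^ (j * k)) (l a • (T ^ a) x) ∈ U}} ∈ p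

/-- hypercyclic operator -/
def Hypercyclic {X : Type*} [NormedAddCommGroup X] [NormedSpace ℂ X] (T : X →L[ℂ] X) : Prop :=
  ∃ x : X, Dense (Set.range fun n : ℕ => (T ^ n) x)

/-- topological multiple recurrence -/
def TopMultiplyRecurrent {X : Type*} [NormedAddCommGroup X] [NormedSpace ℂ X]
    (T : X →L[ℂ] X) : Prop :=
  ∀ U : Set X, IsOpen U → U.Nonempty → ∀ r : ℕ, ∃ k : ℕ, 0 < k ∧
    ∃ x : X, ∀ j ≤ r, (T ^ (j * k)) x ∈ U

/-- `𝓕`-operator -/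
def FOperator {X : Type*} [NormedAddCommGroup X] [NormedSpace ℂ X]
    (F : Set ℕ → Prop) (T : X →L[ℂ] X) : Prop :=
  ∀ U V : Set X, IsOpen U → IsOpen V → U.Nonempty → V.Nonempty →
    F {n : ℕ | ∃ x ∈ U, (T ^ n) x ∈ V}

/-- mixing operator -/
def MixingOp {X : Type*} [NormedAddCommGroup X] [NormedSpace ℂ X]
    (T : X →L[ℂ] X) : Prop :=
  ∀ U V : Set X, IsOpen U → IsOpen V → U.Nonempty → V.Nonempty →
    {n : ℕ | ∃ x ∈ U, (T ^ n) x ∈ V} ∈ Filter.cofinite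

/-- recurrent operator -/
def RecurrentOp {X : Type*} [NormedAddCommGroup X] [NormedSpace ℂ X]
    (T : X →L[ℂ] X) : Prop :=
  ∀ U : Set X, IsOpen U → U.Nonempty →
    ∃ n : ℕ, 0 < n ∧ (U ∩ (fun x => (T ^ n) x) ⁻¹' U).Nonempty

/-- syndetic set -/
def Syndetic (A : Set ℕ) : Prop :=
  ∃ k : ℕ, 0 < k ∧ ∀ n : ℕ, ∃ i : ℕ, 1 ≤ i ∧ i ≤ k ∧ n + i ∈ A

/-- upper (asymptotic) density -/
noncomputable def upperDensity (A : Set ℕ) : ℝ :=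
  Filter.limsup (fun n : ℕ => (Nat.card (A ∩ Set.Icc 1 n : Set ℕ) : ℝ) / n) Filter.atTop

/-- bounded weight -/
def BddWeight {ι : Type*} (w : ι → ℂ) : Prop := ∃ C : ℝ, ∀ i, ‖w i‖ ≤ C

/-- unilateral weighted backward shift relative to a basis `e` -/
def IsUnilateralWeightedShift {X : Type*} [NormedAddCommGroup X] [NormedSpace ℂ X]
    (e : ℕ → X) (w : ℕ → ℂ) (B : X →L[ℂ] X) : Prop :=
  B (e 0) = 0 ∧ ∀ n : ℕ, B (e (n + 1)) = w (n + 1) • e n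

/-- bilateral weighted backward shift relative to a basis `e` -/
def IsBilateralWeightedShift {X : Type*} [NormedAddCommGroup X] [NormedSpace ℂ X]
    (e : ℤ → X) (w : ℤ → ℂ) (B : X →L[ℂ] X) : Prop :=
  ∀ k : ℤ, B (e k) = w k • e (k - 1)

/-- `B ⊕ B² ⊕ ⋯ ⊕ B^r` acting on `X^r` -/
noncomputable def directSumPow {X : Type*} [NormedAddCommGroup X] [NormedSpace ℂ X]
    (T : X →L[ℂ] X) (r : ℕ) : (Fin r → X) →L[ℂ] (Fin r → X) :=
  ContinuousLinearMap.pi fun i => (T ^ ((i : ℕ) + 1)).comp (ContinuousLinearMap.proj i)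

/-- canonical basis vector of `c₀` over a discrete index type -/
noncomputable def c0Single {α : Type*} [TopologicalSpace α] [DiscreteTopology α]
    [DecidableEq α] (k : α) : ZeroAtInftyContinuousMap α ℂ where
  toFun := fun m => if m = k then 1 else 0
  continuous_toFun := continuous_of_discreteTopology
  zero_at_infty' := by
    rw [Filter.cocompact_eq_cofinite]
    refine Filter.Tendsto.congr' ?_ tendsto_const_nhds
    filter_upwards [Filter.eventually_cofinite_ne k] with m hm
    simp [hm]

/-- the set `A_{M;j}` for a bilateral weight -/
def AMjZ (w : ℤ → ℂ) (M : ℝ) (j : ℤ) : Set ℕ :=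
  {n : ℕ | M < ∏ i ∈ Finset.Icc (j + 1) (j + (n : ℤ)), ‖w i‖}

/-- the set `Ā_{M;j}` for a bilateral weight -/
def AbarMjZ (w : ℤ → ℂ) (M : ℝ) (j : ℤ) : Set ℕ :=
  {n : ℕ | ∏ i ∈ Finset.Icc (j - (n : ℤ) + 1) j, ‖w i‖ < 1 / M}

/-- the set `A_{M;j}` for a unilateral weight -/
def AMjN (w : ℕ → ℂ) (M : ℝ) (j : ℕ) : Set ℕ :=
  {n : ℕ | M < ∏ i ∈ Finset.Icc (j + 1) (j + n), ‖w i‖}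

section Aux
variable {X : Type*} [NormedAddCommGroup X] [NormedSpace ℂ X]
  {e : ℕ → X} {w : ℕ → ℂ} {B : X →L[ℂ] X}

lemma shift_pow_apply (hB : IsUnilateralWeightedShift e w B) :
    ∀ N u : ℕ, (B ^ N) (e (N + u)) = (∏ i ∈ Finset.Ioc u (u + N), w i) • e u := by
  intro N
  induction N with
  | zero => intro u; simp
  | succ N ih =>
    intro u
    have h1 : (B ^ (N + 1)) (e (N + 1 + u)) = (B ^ N) (B (e (u + N + 1))) := by
      rw [pow_succ, ContinuousLinearMap.mul_apply, show N + 1 + u = u + N + 1 by omega]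
    have h2 := ih u
    rw [Nat.add_comm N u] at h2
    rw [h1, hB.2, map_smul, h2, smul_smul]
    congr 1
    rw [show u + (N + 1) = (u + N) + 1 from rfl,
      Finset.prod_Ioc_succ_top (Nat.le_add_right u N), mul_comm]

lemma shift_pow_apply_zero (hB : IsUnilateralWeightedShift e w B) :
    ∀ N t : ℕ, t < N → (B ^ N) (e t) = 0 := by
  intro N
  induction N with
  | zero => omega
  | succ N ih =>
    intro t ht
    have h1 : (B ^ (N + 1)) (e t) = (B ^ N) (B (e t)) := by
      rw [pow_succ, ContinuousLinearMap.mul_apply]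
    cases t with
    | zero => rw [h1, hB.1, map_zero]
    | succ s => rw [h1, hB.2, map_smul, ih s (by omega), smul_zero]

lemma coord_pow {f : ℕ → X →L[ℂ] ℂ} (hfe : ∀ n m : ℕ, f n (e m) = if m = n then 1 else 0)
    (hdense : Dense (Submodule.span ℂ (Set.range e) : Set X))
    (hB : IsUnilateralWeightedShift e w B) (N : ℕ) (x : X) :
    f 0 ((B ^ N) x) = (∏ i ∈ Finset.Ioc 0 N, w i) * f N x := by
  have hEqOn : Set.EqOn (⇑((f 0).comp (B ^ N))) (⇑((∏ i ∈ Finset.Ioc 0 N, w i) • f N))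
      (Set.range e) := by
    rintro _ ⟨t, rfl⟩
    simp only [ContinuousLinearMap.comp_apply, ContinuousLinearMap.smul_apply, smul_eq_mul]
    rcases lt_or_ge t N with h | h
    · rw [shift_pow_apply_zero hB N t h, map_zero, hfe, if_neg (by omega), mul_zero]
    · obtain ⟨u, rfl⟩ : ∃ u, t = N + u := ⟨t - N, by omega⟩
      rw [shift_pow_apply hB N u, map_smul, hfe, hfe, smul_eq_mul]
      by_cases hu : u = 0
      · subst hu; simp
      · simp only [hu, if_neg (by omega : ¬ N + u = N), if_neg hu, if_false, mul_zero]
  have h2 := LinearMap.eqOn_span' (R := ℂ) hEqOn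
  have h3 := Continuous.ext_on hdense ((f 0).comp (B ^ N)).continuous
    ((∏ i ∈ Finset.Ioc 0 N, w i) • f N).continuous h2
  have := congrFun h3 x
  simpa using this
end Aux

lemma comb {w : ℕ → ℂ} {C : ℝ} (hC1 : 1 ≤ C) (hw0 : ∀ n, w n ≠ 0) (hwC : ∀ i, ‖w i‖ ≤ C)
    (H : ∀ M : ℝ, 0 < M → ∀ m : ℕ, ∃ n : ℕ, 0 < n ∧ ∀ l, 1 ≤ l → l ≤ m →
      M < ∏ i ∈ Finset.Ioc 0 (l * n), ‖w i‖) :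
    ∀ q r : ℕ, ∀ M : ℝ, 0 < M → ∃ k : ℕ, q < k ∧ ∀ j, 1 ≤ j → j ≤ r → ∀ s, s ≤ q →
      M < ∏ i ∈ Finset.Ioc s (s + j * k), ‖w i‖ := by
  intro q r M hM
  set P : ℕ → ℝ := fun t => ∏ i ∈ Finset.Ioc 0 t, ‖w i‖ with hPdef
  have hPpos : ∀ t, 0 < P t := fun t =>
    Finset.prod_pos fun i _ => norm_pos_iff.2 (hw0 i)
  have hgap : ∀ a b : ℕ, a ≤ b → P b ≤ P a * C ^ (b - a) := by
    intro a b hab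
    have h1 : P a * ∏ i ∈ Finset.Ioc a b, ‖w i‖ = P b :=
      Finset.prod_Ioc_consecutive _ (Nat.zero_le a) hab
    rw [← h1]
    have h2 : ∏ i ∈ Finset.Ioc a b, ‖w i‖ ≤ ∏ _i ∈ Finset.Ioc a b, C :=
      Finset.prod_le_prod (fun i _ => norm_nonneg _) (fun i _ => hwC i)
    rw [Finset.prod_const, Nat.card_Ioc] at h2
    exact mul_le_mul_of_nonneg_left h2 (hPpos a).le
  have hCpos : (0:ℝ) < C := lt_of_lt_of_le one_pos hC1
  set E := (r + 2) * (q + 1) with hE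
  set M₁ := M * C ^ q with hM₁def
  have hM₁ : 0 < M₁ := mul_pos hM (pow_pos hCpos q)
  have hM₂ : 0 < M₁ * C ^ E := mul_pos hM₁ (pow_pos hCpos E)
  obtain ⟨n, hn, hln⟩ := H (M₁ * C ^ E) hM₂ ((r + 1) * (q + 1) + 1)
  have key : ∀ t l : ℕ, 1 ≤ l → l ≤ (r + 1) * (q + 1) + 1 → t ≤ l * n → l * n ≤ t + E →
      M₁ < P t := by
    intro t l h1 h2 h3 h4
    have hPb := hln l h1 h2
    have hb : P (l * n) ≤ P t * C ^ (l * n - t) := hgap t (l * n) h3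
    have h5 : M₁ * C ^ E < P t * C ^ E := by
      calc M₁ * C ^ E < P (l * n) := hPb
        _ ≤ P t * C ^ (l * n - t) := hb
        _ ≤ P t * C ^ E := by
            exact mul_le_mul_of_nonneg_left (pow_le_pow_right₀ hC1 (by omega)) (hPpos t).le
    exact lt_of_mul_lt_mul_right h5 (pow_pos hCpos E).le
  -- final step from M₁ < P (s + j*k) to the goal
  have final : ∀ s k j : ℕ, s ≤ q → M₁ < P (s + j * k) →
      M < ∏ i ∈ Finset.Ioc s (s + j * k), ‖w i‖ := by
    intro s k j hs h6
    have h7 : P s ≤ C ^ q := by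
      have := hgap 0 s (Nat.zero_le s)
      simp only [hPdef] at this ⊢
      calc P s ≤ P 0 * C ^ (s - 0) := this
        _ = C ^ s := by simp [hPdef]
        _ ≤ C ^ q := pow_le_pow_right₀ hC1 hs
    have h8 : P s * ∏ i ∈ Finset.Ioc s (s + j * k), ‖w i‖ = P (s + j * k) :=
      Finset.prod_Ioc_consecutive _ (Nat.zero_le s) (Nat.le_add_right _ _)
    have h9 : M * P s ≤ M₁ := by
      rw [hM₁def]; exact mul_le_mul_of_nonneg_left h7 hM.le
    have h10 : M * P s < P s * ∏ i ∈ Finset.Ioc s (s + j * k), ‖w i‖ := by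
      rw [h8]; exact lt_of_le_of_lt h9 h6
    rw [mul_comm M (P s)] at h10
    exact lt_of_mul_lt_mul_left h10 (hPpos s).le
  by_cases hcase : n ≤ 2 * (q + 1)
  · -- Case A : k = (q / n + 1) * n
    set c := q / n + 1 with hc
    refine ⟨c * n, ?_, ?_⟩
    · have h1 := Nat.div_add_mod q n
      have h2 := Nat.mod_lt q hn
      have h3 : c * n = n * (q / n) + n := by rw [hc]; ring
      linarith
    · intro j hj1 hjr s hs
      refine final s (c * n) j hs (key (s + j * (c * n)) ((s + j * (c * n)) / n + 1) ?_ ?_ ?_ ?_)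
      · exact Nat.succ_le_succ (Nat.zero_le _)
      · have h4 : (s + j * (c * n)) / n = s / n + j * c := by
          rw [← Nat.mul_assoc, Nat.add_mul_div_right _ _ hn]
        have h5 : s / n ≤ q := le_trans (Nat.div_le_self s n) hs
        have h6 : j * c ≤ r * c := Nat.mul_le_mul_right c hjr
        have h7 : c ≤ q + 1 := by
          rw [hc]; exact Nat.add_le_add_right (Nat.div_le_self q n) 1
        have h8 : r * c ≤ r * (q + 1) := Nat.mul_le_mul_left r h7
        have h9 : (r + 1) * (q + 1) = r * (q + 1) + (q + 1) := by ring
        linarith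
      · have h1 := Nat.div_add_mod (s + j * (c * n)) n
        have h2 := Nat.mod_lt (s + j * (c * n)) hn
        have h3 : ((s + j * (c * n)) / n + 1) * n = n * ((s + j * (c * n)) / n) + n := by ring
        linarith
      · have h1 := Nat.div_add_mod (s + j * (c * n)) n
        have h3 : ((s + j * (c * n)) / n + 1) * n = n * ((s + j * (c * n)) / n) + n := by ring
        have h4 : E = r * (q + 1) + 2 * (q + 1) := by rw [hE]; ring
        have h5 := Nat.mul_div_le (s + j * (c * n)) n
        have h10 : 0 ≤ r * (q + 1) := Nat.zero_le _
        linarith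
  · -- Case B : k = n - (q + 1)
    refine ⟨n - (q + 1), by omega, ?_⟩
    intro j hj1 hjr s hs
    have hjk : j * (n - (q + 1)) + j * (q + 1) = j * n := by
      rw [← Nat.mul_add]; congr 1; omega
    have h2 : 1 * (q + 1) ≤ j * (q + 1) := Nat.mul_le_mul_right (q + 1) hj1
    have h6 : j * (q + 1) ≤ r * (q + 1) := Nat.mul_le_mul_right (q + 1) hjr
    have h4 : E = r * (q + 1) + 2 * (q + 1) := by rw [hE]; ring
    refine final s (n - (q + 1)) j hs (key (s + j * (n - (q + 1))) j hj1 ?_ ?_ ?_)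
    · have h9 : (r + 1) * (q + 1) = r * (q + 1) + (q + 1) := by ring
      have h10 : r * 1 ≤ r * (q + 1) := Nat.mul_le_mul_left r (by omega)
      linarith
    · linarith
    · linarith

lemma key_iff {X : Type*} [NormedAddCommGroup X] [NormedSpace ℂ X]
    (e : ℕ → X) (he : ∀ n, ‖e n‖ = 1)
    (f : ℕ → X →L[ℂ] ℂ) (hfe : ∀ n m : ℕ, f n (e m) = if m = n then 1 else 0)
    (hf : ∀ (n : ℕ) (x : X), ‖f n x‖ ≤ ‖x‖)
    (hdense : Dense (Submodule.span ℂ (Set.range e) : Set X))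
    (w : ℕ → ℂ) (hw0 : ∀ n, w n ≠ 0) (hwb : BddWeight w)
    (B : X →L[ℂ] X) (hB : IsUnilateralWeightedShift e w B) :
    TopMultiplyRecurrent B ↔
      ∀ M > (0 : ℝ), ∃ m₀ : ℕ, ∀ m > m₀, ∃ n : ℕ, 0 < n ∧
        ∀ l : ℕ, 1 ≤ l → l ≤ m → M < ∏ i ∈ Finset.Icc 1 (l * n), ‖w i‖ := by
  constructor
  · -- necessity
    intro hrec M hM
    refine ⟨0, fun m hm => ?_⟩
    set ε := 1 / (M + 2) with hεdef
    have hεpos : 0 < ε := by rw [hεdef]; positivity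
    obtain ⟨k, hk, x, hx⟩ := hrec (Metric.ball (e 0) ε) Metric.isOpen_ball
      ⟨e 0, Metric.mem_ball_self hεpos⟩ m
    refine ⟨k, hk, fun l hl1 hl2 => ?_⟩
    rw [show Finset.Icc 1 (l * k) = Finset.Ioc 0 (l * k) by rw [← Finset.Icc_add_one_left_eq_Ioc, zero_add]]
    have hlk : 1 ≤ l * k := Nat.one_le_iff_ne_zero.2 (by positivity)
    have hxball : ‖x - e 0‖ < ε := by
      have h0 := hx 0 (Nat.zero_le m)
      simpa [Metric.mem_ball, dist_eq_norm] using h0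
    have hlball : ‖(B ^ (l * k)) x - e 0‖ < ε := by
      have h0 := hx l hl2
      simpa [Metric.mem_ball, dist_eq_norm] using h0
    set A := f 0 ((B ^ (l * k)) x) with hA
    have hA1 : ‖A - 1‖ < ε := by
      have h1 : A - 1 = f 0 ((B ^ (l * k)) x - e 0) := by
        rw [map_sub, hfe 0 0, if_pos rfl]
      rw [h1]
      exact lt_of_le_of_lt (hf 0 _) hlball
    have hAlow : 1 - ε < ‖A‖ := by
      have := norm_sub_norm_le (1 : ℂ) A
      rw [norm_one, norm_sub_rev] at this
      linarith
    have hfsmall : ‖f (l * k) x‖ < ε := by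
      have h1 : f (l * k) x = f (l * k) (x - e 0) := by
        rw [map_sub, hfe (l * k) 0, if_neg (by omega), sub_zero]
      rw [h1]
      exact lt_of_le_of_lt (hf _ _) hxball
    have hcp := coord_pow hfe hdense hB (l * k) x
    have hArw : ‖A‖ = (∏ i ∈ Finset.Ioc 0 (l * k), ‖w i‖) * ‖f (l * k) x‖ := by
      rw [hA, hcp, norm_mul, norm_prod]
    set Pr := ∏ i ∈ Finset.Ioc 0 (l * k), ‖w i‖ with hPr
    have hPr0 : 0 ≤ Pr := Finset.prod_nonneg fun i _ => norm_nonneg _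
    have h6 : 1 - ε < Pr * ε := by
      calc 1 - ε < ‖A‖ := hAlow
        _ = Pr * ‖f (l * k) x‖ := hArw
        _ ≤ Pr * ε := mul_le_mul_of_nonneg_left hfsmall.le hPr0
    have hMε : (M + 1) * ε = 1 - ε := by
      rw [hεdef]; field_simp; ring
    have h7 : (M + 1) * ε < Pr * ε := by rw [hMε]; exact h6
    have h8 : M + 1 < Pr := lt_of_mul_lt_mul_right h7 hεpos.le
    linarith
  · -- sufficiency
    intro H U hU hUne r
    obtain ⟨C₀, hC₀⟩ := hwb
    set C := max C₀ 1 with hCdef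
    have hC1 : (1 : ℝ) ≤ C := le_max_right _ _
    have hwC : ∀ i, ‖w i‖ ≤ C := fun i => (hC₀ i).trans (le_max_left _ _)
    have H' : ∀ M : ℝ, 0 < M → ∀ m : ℕ, ∃ n, 0 < n ∧ ∀ l, 1 ≤ l → l ≤ m →
        M < ∏ i ∈ Finset.Ioc 0 (l * n), ‖w i‖ := by
      intro M hM m
      obtain ⟨m₀, hm₀⟩ := H M hM
      obtain ⟨n, hn, h⟩ := hm₀ (max m (m₀ + 1))
        (lt_of_lt_of_le (Nat.lt_succ_self m₀) (le_max_right m (m₀ + 1)))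
      refine ⟨n, hn, fun l h1 h2 => ?_⟩
      have := h l h1 (le_trans h2 (le_max_left _ _))
      rwa [show Finset.Icc 1 (l * n) = Finset.Ioc 0 (l * n) by rw [← Finset.Icc_add_one_left_eq_Ioc, zero_add]] at this
    obtain ⟨x₀, hx₀span, hx₀U⟩ := hdense.exists_mem_open hU hUne
    obtain ⟨c, hc⟩ := Finsupp.mem_span_range_iff_exists_finsupp.1 (SetLike.mem_coe.1 hx₀span)
    obtain ⟨ε, hε, hball⟩ := Metric.isOpen_iff.1 hU x₀ hx₀U
    set F := c.support with hF
    set q := F.sup id with hq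
    set S := ∑ s ∈ F, ‖c s‖ with hSdef
    have hS0 : 0 ≤ S := Finset.sum_nonneg fun s _ => norm_nonneg _
    set K := (S + 1) * ((r : ℝ) + 1) / ε with hKdef
    have hK : 0 < K := by rw [hKdef]; positivity
    obtain ⟨k, hkq, hk⟩ := comb hC1 hw0 hwC H' q r K hK
    set W : ℕ → ℕ → ℂ := fun s j => ∏ i ∈ Finset.Ioc s (s + j * k), w i with hW
    have hWne : ∀ s j, W s j ≠ 0 := fun s j => Finset.prod_ne_zero_iff.2 fun i _ => hw0 i
    set v : ℕ → X := fun j => ∑ s ∈ F, (c s / W s j) • e (s + j * k) with hv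
    have hv0 : v 0 = x₀ := by
      rw [← hc, Finsupp.sum]
      simp only [hv, hW]
      apply Finset.sum_congr rfl
      intro s _
      simp
    have hsF : ∀ s ∈ F, s ≤ q := fun s hs => Finset.le_sup (f := id) hs
    have hvnorm : ∀ j, 1 ≤ j → j ≤ r → ‖v j‖ ≤ S / K := by
      intro j h1 h2
      simp only [hv]
      calc ‖∑ s ∈ F, (c s / W s j) • e (s + j * k)‖
          ≤ ∑ s ∈ F, ‖(c s / W s j) • e (s + j * k)‖ := norm_sum_le _ _
        _ = ∑ s ∈ F, ‖c s‖ / ‖W s j‖ := by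
            refine Finset.sum_congr rfl fun s _ => ?_
            rw [norm_smul, he, mul_one, norm_div]
        _ ≤ ∑ s ∈ F, ‖c s‖ / K := by
            refine Finset.sum_le_sum fun s hs => ?_
            have hKW : K ≤ ‖W s j‖ := by
              have h3 := hk j h1 h2 s (hsF s hs)
              simp only [hW]
              rw [norm_prod]
              exact h3.le
            exact div_le_div_of_nonneg_left (norm_nonneg _) hK hKW
        _ = S / K := by rw [hSdef, Finset.sum_div]
    have hBv : ∀ J j : ℕ, (B ^ (J * k)) (v j) = if J ≤ j then v (j - J) else 0 := by
      intro J j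
      by_cases hj : J ≤ j
      · rw [if_pos hj]
        simp only [hv, map_sum]
        refine Finset.sum_congr rfl fun s _ => ?_
        rw [map_smul]
        have hmul : (j - J) * k + J * k = j * k := by
          rw [← Nat.add_mul, Nat.sub_add_cancel hj]
        have hidx : s + j * k = J * k + (s + (j - J) * k) := by omega
        rw [hidx, shift_pow_apply hB (J * k) (s + (j - J) * k), smul_smul]
        have hidx2 : s + (j - J) * k + J * k = s + j * k := by omega
        rw [hidx2]
        have hle : s + (j - J) * k ≤ s + j * k := by omega
        have hsplit : W s (j - J) * (∏ i ∈ Finset.Ioc (s + (j - J) * k) (s + j * k), w i)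
            = W s j := by
          simp only [hW]
          exact Finset.prod_Ioc_consecutive _ (Nat.le_add_right _ _) hle
        have hD : (∏ i ∈ Finset.Ioc (s + (j - J) * k) (s + j * k), w i) ≠ 0 :=
          Finset.prod_ne_zero_iff.2 fun i _ => hw0 i
        congr 1
        rw [← hsplit, div_mul_eq_mul_div, mul_div_mul_right _ _ hD]
      · rw [if_neg hj]
        simp only [hv, map_sum]
        refine Finset.sum_eq_zero fun s hs => ?_
        have h1 : s < k := lt_of_le_of_lt (hsF s hs) hkq
        have h2 : (j + 1) * k ≤ J * k := Nat.mul_le_mul_right k (by omega)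
        have h3 : (j + 1) * k = j * k + k := by ring
        rw [map_smul, shift_pow_apply_zero hB _ _ (by omega), smul_zero]
    refine ⟨k, by omega, ∑ j ∈ Finset.range (r + 1), v j, ?_⟩
    intro J hJ
    have hmain : (B ^ (J * k)) (∑ j ∈ Finset.range (r + 1), v j)
        = ∑ j ∈ Finset.range (r + 1 - J), v j := by
      rw [map_sum, Finset.sum_congr rfl fun j _ => hBv J j, Finset.range_eq_Ico,
        ← Finset.sum_Ico_consecutive _ (Nat.zero_le J) (by omega : J ≤ r + 1)]
      have h2 : ∑ j ∈ Finset.Ico 0 J, (if J ≤ j then v (j - J) else 0) = 0 :=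
        Finset.sum_eq_zero fun j hj => if_neg (by rw [Finset.mem_Ico] at hj; omega)
      rw [h2, zero_add, Finset.sum_Ico_eq_sum_range]
      refine Finset.sum_congr rfl fun i _ => ?_
      rw [if_pos (Nat.le_add_right J i)]
      congr 1
      omega
    apply hball
    rw [Metric.mem_ball, dist_eq_norm, hmain]
    have hr1J : 1 ≤ r + 1 - J := by omega
    have hsplit2 : ∑ j ∈ Finset.range (r + 1 - J), v j
        = x₀ + ∑ j ∈ Finset.Ico 1 (r + 1 - J), v j := by
      rw [Finset.range_eq_Ico, ← Finset.sum_Ico_consecutive _ (Nat.zero_le 1) hr1J]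
      congr 1
      rw [show Finset.Ico 0 1 = {0} from rfl, Finset.sum_singleton, hv0]
    rw [hsplit2, add_sub_cancel_left]
    have hcard : ((r + 1 - J - 1 : ℕ) : ℝ) ≤ r := by exact_mod_cast (by omega : r + 1 - J - 1 ≤ r)
    have hSK : 0 ≤ S / K := div_nonneg hS0 hK.le
    calc ‖∑ j ∈ Finset.Ico 1 (r + 1 - J), v j‖
        ≤ ∑ j ∈ Finset.Ico 1 (r + 1 - J), ‖v j‖ := norm_sum_le _ _
      _ ≤ ∑ _j ∈ Finset.Ico 1 (r + 1 - J), (S / K) := by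
          refine Finset.sum_le_sum fun j hj => ?_
          rw [Finset.mem_Ico] at hj
          exact hvnorm j hj.1 (by omega)
      _ = ((r + 1 - J - 1 : ℕ) : ℝ) * (S / K) := by
          rw [Finset.sum_const, Nat.card_Ico, nsmul_eq_mul]
      _ ≤ (r : ℝ) * (S / K) := mul_le_mul_of_nonneg_right hcard hSK
      _ < ε := by
          rw [show (r : ℝ) * (S / K) = (r * S) / K by ring, div_lt_iff₀ hK]
          calc (r : ℝ) * S < (S + 1) * ((r : ℝ) + 1) := by
                nlinarith [hS0, Nat.cast_nonneg (α := ℝ) r]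
            _ = ε * K := by rw [hKdef]; field_simp

namespace C0Inst

abbrev X := ZeroAtInftyContinuousMap ℕ ℂ

lemma c0Single_apply (k m : ℕ) : (c0Single k : X) m = if m = k then 1 else 0 := rfl

lemma norm_apply_le (g : X) (n : ℕ) : ‖g n‖ ≤ ‖g‖ := by
  rw [← ZeroAtInftyContinuousMap.norm_toBCF_eq_norm]
  exact BoundedContinuousFunction.norm_coe_le_norm g.toBCF n

lemma norm_le_of_forall {g : X} {C : ℝ} (hC : 0 ≤ C) (h : ∀ n, ‖g n‖ ≤ C) : ‖g‖ ≤ C := by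
  rw [← ZeroAtInftyContinuousMap.norm_toBCF_eq_norm]
  exact (BoundedContinuousFunction.norm_le hC).2 h

lemma norm_c0Single (n : ℕ) : ‖(c0Single n : X)‖ = 1 := by
  refine le_antisymm (norm_le_of_forall one_pos.le fun m => ?_) ?_
  · rw [c0Single_apply]
    split <;> simp
  · have := norm_apply_le (c0Single n) n
    rwa [c0Single_apply, if_pos rfl, norm_one] at this

noncomputable def coord (n : ℕ) : X →L[ℂ] ℂ :=
  LinearMap.mkContinuous
    { toFun := fun g => g n
      map_add' := fun g h => by
        show (g + h) n = g n + h n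
        rw [ZeroAtInftyContinuousMap.coe_add, Pi.add_apply]
      map_smul' := fun a g => by
        show (a • g) n = a • g n
        rw [ZeroAtInftyContinuousMap.coe_smul, Pi.smul_apply] }
    1 (fun g => by simpa using norm_apply_le g n)

lemma coord_apply (n : ℕ) (g : X) : coord n g = g n := rfl

lemma dense_span : Dense (Submodule.span ℂ (Set.range (c0Single : ℕ → X)) : Set X) := by
  rw [Metric.dense_iff]
  intro g ε hε
  have hco := g.zero_at_infty'
  rw [Filter.cocompact_eq_cofinite] at hco
  have hfin : {m : ℕ | ¬ g m ∈ Metric.ball (0 : ℂ) (ε / 2)}.Finite := by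
    have := hco.eventually (Metric.ball_mem_nhds (0 : ℂ) (half_pos hε))
    exact this
  set T := hfin.toFinset with hT
  set h : X := ∑ m ∈ T, g m • c0Single m with hh
  have hmem : h ∈ (Submodule.span ℂ (Set.range (c0Single : ℕ → X)) : Set X) := by
    refine SetLike.mem_coe.2 (Submodule.sum_mem _ fun m _ => Submodule.smul_mem _ _ ?_)
    exact Submodule.subset_span ⟨m, rfl⟩
  refine ⟨h, ?_, hmem⟩
  rw [Metric.mem_ball, dist_comm, dist_eq_norm]
  have happ : ∀ t, h t = if t ∈ T then g t else 0 := by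
    intro t
    rw [hh]
    have hcoe : (∑ m ∈ T, g m • c0Single m : X) t = ∑ m ∈ T, (g m • c0Single m : X) t := by
      induction T using Finset.induction with
      | empty => rfl
      | insert _ _ hnot ih =>
          rw [Finset.sum_insert hnot, Finset.sum_insert hnot, ZeroAtInftyContinuousMap.coe_add,
            Pi.add_apply, ih]
    rw [hcoe]
    by_cases ht : t ∈ T
    · rw [Finset.sum_eq_single t (fun m _ hm => by
        show g m * (if t = m then (1:ℂ) else 0) = 0
        rw [if_neg (Ne.symm hm), mul_zero]) (fun h' => absurd ht h')]
      show g t * (if t = t then (1:ℂ) else 0) = if t ∈ T then g t else 0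
      rw [if_pos rfl, mul_one, if_pos ht]
    · rw [if_neg ht]
      refine Finset.sum_eq_zero fun m hm => ?_
      show g m * (if t = m then (1:ℂ) else 0) = 0
      rw [if_neg (fun h' : t = m => ht (by rw [h']; exact hm)), mul_zero]
  have : ‖g - h‖ ≤ ε / 2 := by
    refine norm_le_of_forall (by linarith) fun t => ?_
    rw [ZeroAtInftyContinuousMap.coe_sub, Pi.sub_apply, happ t]
    by_cases ht : t ∈ T
    · simp [ht]; linarith
    · rw [if_neg ht, sub_zero]
      have h9 : g t ∈ Metric.ball (0 : ℂ) (ε / 2) := by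
        by_contra hcon
        exact ht (by rw [hT, Set.Finite.mem_toFinset]; exact hcon)
      rw [Metric.mem_ball, dist_eq_norm, sub_zero] at h9
      exact h9.le
  linarith

end C0Inst

namespace LpInst
variable (p : ℝ≥0∞) [Fact (1 ≤ p)]

noncomputable abbrev Y (p : ℝ≥0∞) := lp (fun _ : ℕ => ℂ) p

lemma hp0 : p ≠ 0 := fun h => by
  have := Fact.out (p := 1 ≤ p); rw [h] at this; simp at this

lemma hptop (hp : p ≠ ∞) : 0 < p.toReal :=
  ENNReal.toReal_pos (hp0 p) hp

lemma norm_single_one (hp : p ≠ ∞) (n : ℕ) : ‖(lp.single p n 1 : Y p)‖ = 1 := by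
  have := lp.norm_single (E := fun _ : ℕ => ℂ) (pos_iff_ne_zero.2 (hp0 p)) n (1 : ℂ)
  simpa using this

lemma single_one_apply (m n : ℕ) : (lp.single p m (1 : ℂ) : Y p) n = if m = n then 1 else 0 := by
  by_cases h : m = n
  · subst h; rw [lp.single_apply_self, if_pos rfl]
  · rw [lp.single_apply_ne p m _ (Ne.symm h), if_neg h]

noncomputable def coord (n : ℕ) : Y p →L[ℂ] ℂ :=
  LinearMap.mkContinuous
    { toFun := fun g => g n
      map_add' := fun g h => by
        show (g + h) n = g n + h n
        rw [lp.coeFn_add, Pi.add_apply]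
      map_smul' := fun a g => by
        show (a • g) n = a • g n
        rw [lp.coeFn_smul, Pi.smul_apply] }
    1 (fun g => by simpa using lp.norm_apply_le_norm (hp0 p) g n)

lemma coord_apply (n : ℕ) (g : Y p) : coord p n g = g n := rfl

lemma dense_span (hp : p ≠ ∞) :
    Dense (Submodule.span ℂ (Set.range (fun n : ℕ => (lp.single p n 1 : Y p))) : Set (Y p)) := by
  intro x
  refine mem_closure_of_tendsto (lp.hasSum_single hp x) (Filter.Eventually.of_forall fun s => ?_)
  refine SetLike.mem_coe.2 (Submodule.sum_mem _ fun i _ => ?_)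
  have h1 : lp.single p i (x i) = (x i) • (lp.single p i 1 : Y p) := by
    rw [← lp.single_smul, smul_eq_mul, mul_one]
  rw [h1]
  exact Submodule.smul_mem _ _ (Submodule.subset_span ⟨i, rfl⟩)

end LpInst

theorem stmt6 :
    (∀ w : ℕ → ℂ, (∀ n, w n ≠ 0) → BddWeight w →
      ∀ B : ZeroAtInftyContinuousMap ℕ ℂ →L[ℂ] ZeroAtInftyContinuousMap ℕ ℂ,
        IsUnilateralWeightedShift c0Single w B →
        (TopMultiplyRecurrent B ↔
          ∀ M > (0 : ℝ), ∃ m₀ : ℕ, ∀ m > m₀, ∃ n : ℕ, 0 < n ∧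
            ∀ l : ℕ, 1 ≤ l → l ≤ m → M < ∏ i ∈ Finset.Icc 1 (l * n), ‖w i‖)) ∧
    ∀ (p : ℝ≥0∞) [Fact (1 ≤ p)], p ≠ ∞ →
      ∀ w : ℕ → ℂ, (∀ n, w n ≠ 0) → BddWeight w →
      ∀ B : lp (fun _ : ℕ => ℂ) p →L[ℂ] lp (fun _ : ℕ => ℂ) p,
        IsUnilateralWeightedShift (fun n => lp.single p n 1) w B →
        (TopMultiplyRecurrent B ↔
          ∀ M > (0 : ℝ), ∃ m₀ : ℕ, ∀ m > m₀, ∃ n : ℕ, 0 < n ∧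
            ∀ l : ℕ, 1 ≤ l → l ≤ m → M < ∏ i ∈ Finset.Icc 1 (l * n), ‖w i‖) := by
  constructor
  · intro w hw0 hwb B hB
    refine key_iff c0Single C0Inst.norm_c0Single C0Inst.coord ?_
      (fun n x => C0Inst.norm_apply_le x n) C0Inst.dense_span w hw0 hwb B hB
    intro n m
    rw [C0Inst.coord_apply, C0Inst.c0Single_apply]
    by_cases h : m = n
    · subst h; simp
    · rw [if_neg (Ne.symm h), if_neg h]
  · intro p _ hp w hw0 hwb B hB
    refine key_iff (fun n => lp.single p n 1) (LpInst.norm_single_one p hp) (LpInst.coord p) ?_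
      (fun n x => by simpa [LpInst.coord_apply] using lp.norm_apply_le_norm (LpInst.hp0 p) x n)
      (LpInst.dense_span p hp) w hw0 hwb B hB
    intro n m
    rw [LpInst.coord_apply, LpInst.single_one_apply]
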